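/- Let f(x; w) be a depth-d continued fraction ladder on ℝ^p with a_k = w_k^T x, i.e. f(x;w) = K_{d+1}(a_0,...,a_d)/K_d(a_1,...,a_d). Then at any x where K_d(a_1,...,a_d) ≠ 0, the partial derivative of f with respect to x_j equals the sum over k from 0 to d of (−1)^k · (K_{d−k}(a_{k+1},...,a_d)/K_d(a_1,...,a_d))² · w_{jk}. -/

import Mathlib

/-- Continuant polynomial: K [] = 1, K [a] = a,
K (a :: b :: l) = a * K (b :: l) + K l. -/
def cont {R : Type*} [CommRing R] : List R → R
  | [] => 1
  | [a] => a
  | a :: b :: l => a * cont (b :: l) + cont l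

def contP : List ℝ → ℝ × ℝ
  | [] => (1, 0)
  | a :: l => (a * (contP l).1 + (contP l).2, (contP l).1)

lemma cont_eq : ∀ l : List ℝ, cont l = (contP l).1
  | [] => by simp [cont, contP]
  | [a] => by simp [cont, contP]
  | a :: b :: l => by
      rw [cont, cont_eq (b :: l), cont_eq l]; simp [contP]

lemma key (A M : List ℝ) :
    (contP A).1 * (contP (A ++ M)).2 - (contP A).2 * (contP (A ++ M)).1
      = (-1 : ℝ) ^ A.length * (contP M).2 := by
  induction A with
  | nil => simp [contP]
  | cons a A ih =>
      simp only [List.cons_append, contP, List.length_cons, pow_succ]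
      linear_combination -ih

def contD : List (ℝ × ℝ) → ℝ × ℝ
  | [] => (0, 0)
  | q :: l => (q.2 * (contP (l.map Prod.fst)).1 + q.1 * (contD l).1 + (contD l).2,
      (contD l).1)

lemma hasDerivAt_contP (L : List ((ℝ → ℝ) × ℝ)) (t : ℝ)
    (hL : ∀ q ∈ L, HasDerivAt q.1 q.2 t) :
    HasDerivAt (fun s => (contP (L.map fun q => q.1 s)).1)
        (contD (L.map fun q => (q.1 t, q.2))).1 t ∧
    HasDerivAt (fun s => (contP (L.map fun q => q.1 s)).2)
        (contD (L.map fun q => (q.1 t, q.2))).2 t := by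
  induction L with
  | nil =>
      simp only [List.map_nil, contP, contD]
      exact ⟨hasDerivAt_const t 1, hasDerivAt_const t 0⟩
  | cons q l ih =>
      obtain ⟨ih1, ih2⟩ := ih fun q hq => hL q (List.mem_cons_of_mem _ hq)
      have hq := hL q List.mem_cons_self
      refine ⟨?_, ?_⟩
      · have := (hq.mul ih1).add ih2
        simp only [List.map_cons, contP, contD, List.map_map]
        exact this.congr_deriv (by simp [Function.comp_def])
      · simpa only [List.map_cons, contP, contD] using ih1

lemma contD_eq (L : List (ℝ × ℝ)) :
    (contD L).1 = ∑ k ∈ Finset.range L.length,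
        (L.getD k (0,0)).2 * (contP ((L.map Prod.fst).take k)).1
          * (contP ((L.map Prod.fst).drop (k+1))).1
  ∧ (contD L).2 = ∑ k ∈ Finset.range L.length,
        (L.getD k (0,0)).2 * (contP ((L.map Prod.fst).take k)).2
          * (contP ((L.map Prod.fst).drop (k+1))).1 := by
  induction L with
  | nil => simp [contD]
  | cons q l ih =>
      obtain ⟨ih1, ih2⟩ := ih
      constructor
      · rw [show contD (q :: l) = (q.2 * (contP (l.map Prod.fst)).1 + q.1 * (contD l).1
            + (contD l).2, (contD l).1) from rfl]
        simp only [List.length_cons, Finset.sum_range_succ', List.getD_cons_succ,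
          List.getD_cons_zero, List.map_cons, List.take_succ_cons, List.take_zero,
          List.drop_succ_cons, List.drop_zero, contP, ih1, ih2]
        rw [Finset.mul_sum, add_assoc, ← Finset.sum_add_distrib, add_comm]
        congr 1
        · exact Finset.sum_congr rfl fun k hk => by ring
        · ring
      · rw [show (contD (q :: l)).2 = (contD l).1 from rfl, ih1]
        simp only [List.length_cons, Finset.sum_range_succ', List.getD_cons_succ,
          List.getD_cons_zero, List.map_cons, List.take_succ_cons,
          List.drop_succ_cons, contP]
        simp [contP]

lemma entry_hasDerivAt {p : ℕ} (w x : Fin p → ℝ) (j : Fin p) (t : ℝ) :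
    HasDerivAt (fun s => ∑ i', w i' * Function.update x j s i') (w j) t := by
  have h : ∀ i' : Fin p, HasDerivAt (fun s => w i' * Function.update x j s i')
      (if i' = j then w i' else 0) t := by
    intro i'
    by_cases hi : i' = j
    · subst hi
      simpa [Function.update_self] using (hasDerivAt_id t).const_mul (w i')
    · simp only [Function.update_of_ne hi, hi, if_false]
      exact hasDerivAt_const t _
  have := HasDerivAt.fun_sum (fun i (_ : i ∈ Finset.univ) => h i)
  simpa [Finset.sum_ite_eq'] using this

lemma ofFn_drop (n m : ℕ) (f : Fin n → ℝ) (h : m ≤ n) :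
    (List.ofFn f).drop m = List.ofFn (fun i : Fin (n - m) => f ⟨m + i, by omega⟩) := by
  apply List.ext_getElem
  · simp [h]
  · intro i h1 h2
    simp [List.getElem_drop, List.getElem_ofFn]

lemma drop_cons (n k : ℕ) (f : Fin n → ℝ) (hk : k < n) :
    (List.ofFn f).drop k = f ⟨k, hk⟩ :: (List.ofFn f).drop (k + 1) := by
  rw [List.drop_eq_getElem_cons (by simpa using hk)]
  simp

lemma contP_snd_ofFn (n : ℕ) (f : Fin (n + 1) → ℝ) :
    (contP (List.ofFn f)).2 = cont (List.ofFn fun i : Fin n => f i.succ) := by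
  rw [List.ofFn_succ, cont_eq]; simp [contP]

lemma term_eq (n : ℕ) (v : Fin (n + 1) → ℝ) (c : ℝ) (k : ℕ) (hk : k < n + 1) :
    (c * (contP ((List.ofFn v).take k)).1 * (contP ((List.ofFn v).drop (k + 1))).1
          * (contP (List.ofFn v)).2
        - (contP (List.ofFn v)).1 *
          (c * (contP ((List.ofFn v).take k)).2 * (contP ((List.ofFn v).drop (k + 1))).1))
        / (contP (List.ofFn v)).2 ^ 2
      = (-1 : ℝ) ^ k *
        ((contP ((List.ofFn v).drop (k + 1))).1 / (contP (List.ofFn v)).2) ^ 2 * c := by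
  have hkey := key ((List.ofFn v).take k) ((List.ofFn v).drop k)
  rw [List.take_append_drop, drop_cons (n + 1) k v hk] at hkey
  simp only [contP, List.length_take, List.length_ofFn,
    min_eq_left (Nat.le_of_lt_succ hk |>.trans (Nat.le_succ n))] at hkey
  have halg : c * (contP ((List.ofFn v).take k)).1 * (contP ((List.ofFn v).drop (k + 1))).1
          * (contP (List.ofFn v)).2
        - (contP (List.ofFn v)).1 *
          (c * (contP ((List.ofFn v).take k)).2 * (contP ((List.ofFn v).drop (k + 1))).1)
      = (-1 : ℝ) ^ k * (contP ((List.ofFn v).drop (k + 1))).1 ^ 2 * c := by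
    linear_combination (c * (contP ((List.ofFn v).drop (k + 1))).1) * hkey
  rw [halg, div_pow]
  ring

/-- For a depth-d continued-fraction ladder on ℝ^p with a_k = w_kᵀx, given as
f(x) = K_{d+1}(a_0,...,a_d)/K_d(a_1,...,a_d), at any x where K_d ≠ 0 the
partial derivative of f with respect to x_j equals
∑_{k=0}^d (−1)^k (K_{d−k}(a_{k+1},...,a_d)/K_d(a_1,...,a_d))² w_{jk}. -/
theorem hasDerivAt_ladder (p d : ℕ) (w : Fin (d + 1) → Fin p → ℝ)
    (x : Fin p → ℝ) (j : Fin p)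
    (h : cont (List.ofFn fun i : Fin d => ∑ i', w i.succ i' * x i') ≠ 0) :
    HasDerivAt
      (fun t : ℝ =>
        cont (List.ofFn fun k : Fin (d + 1) => ∑ i', w k i' * Function.update x j t i') /
          cont (List.ofFn fun i : Fin d => ∑ i', w i.succ i' * Function.update x j t i'))
      (∑ k : Fin (d + 1), (-1) ^ (k : ℕ) *
        (cont (List.ofFn fun i : Fin (d - (k : ℕ)) =>
              ∑ i', w ⟨(k : ℕ) + 1 + (i : ℕ), by omega⟩ i' * x i') /
            cont (List.ofFn fun i : Fin d => ∑ i', w i.succ i' * x i')) ^ 2 *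
        w k j)
      (x j) := by
  classical
  -- the list of (function, slope) pairs
  set F : Fin (d + 1) → ((ℝ → ℝ) × ℝ) := fun k =>
    ((fun t => ∑ i', w k i' * Function.update x j t i'), w k j) with hF
  have hmem : ∀ q ∈ List.ofFn F, HasDerivAt q.1 q.2 (x j) := by
    intro q hq
    rw [List.mem_ofFn] at hq
    obtain ⟨k, rfl⟩ := hq
    exact entry_hasDerivAt (w k) x j (x j)
  obtain ⟨hN, hD⟩ := hasDerivAt_contP (List.ofFn F) (x j) hmem
  have hfun : ∀ s : ℝ, ((List.ofFn F).map fun q => q.1 s)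
      = List.ofFn (fun k : Fin (d + 1) => ∑ i', w k i' * Function.update x j s i') := by
    intro s; rw [List.map_ofFn]; rfl
  simp only [hfun] at hN hD
  have hpair : ((List.ofFn F).map fun q => (q.1 (x j), q.2))
      = List.ofFn (fun k : Fin (d + 1) => (∑ i', w k i' * x i', w k j)) := by
    rw [List.map_ofFn]
    simp [hF, Function.comp_def, Function.update_eq_self]
  rw [hpair] at hN hD
  have hD0x : (contP (List.ofFn fun k : Fin (d + 1) => ∑ i', w k i' * x i')).2 ≠ 0 := by
    rw [contP_snd_ofFn]; exact h
  have hD0 : (contP (List.ofFn fun k : Fin (d + 1) =>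
      ∑ i', w k i' * Function.update x j (x j) i')).2 ≠ 0 := by
    simpa [Function.update_eq_self] using hD0x
  have hdiv := hN.div hD hD0
  have hfun2 : (fun t : ℝ =>
      cont (List.ofFn fun k : Fin (d + 1) => ∑ i', w k i' * Function.update x j t i') /
        cont (List.ofFn fun i : Fin d => ∑ i', w i.succ i' * Function.update x j t i'))
      = fun s : ℝ =>
        (contP (List.ofFn fun k : Fin (d + 1) => ∑ i', w k i' * Function.update x j s i')).1 /
        (contP (List.ofFn fun k : Fin (d + 1) => ∑ i', w k i' * Function.update x j s i')).2 := by
    funext s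
    rw [cont_eq, contP_snd_ofFn]
  rw [hfun2]
  refine hdiv.congr_deriv ?_
  symm
  simp only [Function.update_eq_self]
  rw [(contD_eq _).1, (contD_eq _).2]
  simp only [List.map_ofFn, List.length_ofFn]
  have hmapfst : (Prod.fst ∘ fun k : Fin (d + 1) => (∑ i', w k i' * x i', w k j))
      = fun k : Fin (d + 1) => ∑ i', w k i' * x i' := rfl
  rw [hmapfst]
  rw [Finset.sum_mul, Finset.mul_sum, ← Finset.sum_sub_distrib, Finset.sum_div,
    Finset.sum_range]
  refine Finset.sum_congr rfl fun k _ => ?_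
  have hk := k.isLt
  have hgetD : ((List.ofFn fun k : Fin (d + 1) =>
        (∑ i', w k i' * x i', w k j)).getD ↑k (0, 0)).2 = w k j := by
    rw [List.getD_eq_getElem _ _ (by simpa using hk)]
    simp only [List.getElem_ofFn, Fin.eta]
  have hB : (List.ofFn fun i : Fin (d - (k : ℕ)) =>
        ∑ i', w ⟨(k : ℕ) + 1 + (i : ℕ), by omega⟩ i' * x i')
      = (List.ofFn fun k : Fin (d + 1) => ∑ i', w k i' * x i').drop (↑k + 1) := by
    apply List.ext_getElem
    · simp
    · intro i h1 h2
      simp only [List.getElem_drop, List.getElem_ofFn]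
  have hDen : (cont (List.ofFn fun i : Fin d => ∑ i', w i.succ i' * x i') : ℝ)
      = (contP (List.ofFn fun k : Fin (d + 1) => ∑ i', w k i' * x i')).2 := by
    rw [contP_snd_ofFn]
  rw [hgetD, cont_eq, hB, hDen]
  exact (term_eq d (fun k : Fin (d + 1) => ∑ i', w k i' * x i') (w k j) ↑k hk).symm
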